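/- Let α : H → H, (σʲ : H → H)_{j∈ℕ} and γ : H × E → H satisfy the standing regularity conditions, and let g : H → G be three times continuously Fréchet differentiable with Dg, D²g and D³g bounded on H. Define â : H → G, b̂ʲ : H → G (j ∈ ℕ) and ĉ : H × E → G by â(h) = Dg(h)(α(h)) + (1/2)·∑_{j∈ℕ} D²g(h)(σʲ(h), σʲ(h)) + ∫_E ( g(h + γ(h,x)) − g(h) − Dg(h)(γ(h,x)) ) F(dx), b̂ʲ(h) = Dg(h)(σʲ(h)), and ĉ(h,x) = g(h + γ(h,x)) − g(h). Then: (1) for every h ∈ H the series ∑_{j∈ℕ} ‖D²g(h)(σʲ(h), σʲ(h))‖ converges and the integrand defining â is Bochner integrable, so â is well defined; (2) for every n ∈ ℕ there is a constant L̂_n ≥ 0 such that ‖â(h₁) − â(h₂)‖ ≤ L̂_n‖h₁ − h₂‖ for all h₁, h₂ ∈ H with ‖h₁‖, ‖h₂‖ ≤ n; (3) each b̂ʲ is continuously Fréchet differentiable, and for every n ∈ ℕ there exist nonnegative reals (κ̂_nʲ)_{j∈ℕ} with ∑_j (κ̂_nʲ)² < ∞ such that ‖b̂ʲ(h₁) −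 b̂ʲ(h₂)‖ ≤ κ̂_nʲ‖h₁ − h₂‖ and ‖b̂ʲ(h)‖ ≤ κ̂_nʲ whenever ‖h₁‖, ‖h₂‖, ‖h‖ ≤ n; (4) for every n ∈ ℕ there is a measurable ρ̂_n : E → [0,∞) with ∫_E ρ̂_n(x)² F(dx) < ∞ such that ‖ĉ(h₁,x) − ĉ(h₂,x)‖ ≤ ρ̂_n(x)‖h₁ − h₂‖ and ‖ĉ(h,x)‖ ≤ ρ̂_n(x) for all x ∈ E and all h₁, h₂, h ∈ H with norms ≤ n; (5) if moreover g is the restriction of a continuous linear map from H to G, then the ρ̂_n in (4) can be chosen so that ∫_E (ρ̂_n(x)² ∨ ρ̂_n(x)⁴) F(dx) < ∞. -/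

import Mathlib

open MeasureTheory
open scoped ENNReal


section helpers
variable {X Y : Type*} [NormedAddCommGroup X] [NormedSpace ℝ X]
  [NormedAddCommGroup Y] [NormedSpace ℝ Y]

lemma lip_of_fderiv_bound {f : X → Y} (hf : Differentiable ℝ f) {C : ℝ}
    (hC : ∀ x, ‖fderiv ℝ f x‖ ≤ C) (a b : X) : ‖f a - f b‖ ≤ C * ‖a - b‖ :=
  Convex.norm_image_sub_le_of_norm_fderiv_le (s := Set.univ) (fun x _ => hf x)
    (fun x _ => hC x) convex_univ trivial trivial

lemma shift_hasFDerivAt {f : X → Y} (hf : Differentiable ℝ f) (a u : X) :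
    HasFDerivAt (fun u => f (a + u)) (fderiv ℝ f (a + u)) u := by
  have h2 : HasFDerivAt (fun u : X => a + u) (ContinuousLinearMap.id ℝ X) u :=
    (hasFDerivAt_id u).const_add a
  simpa [Function.comp_def] using ((hf (a + u)).hasFDerivAt).comp u h2

lemma taylor1 {f : X → Y} (hf : ContDiff ℝ 2 f) {C : ℝ}
    (hC : ∀ x, ‖fderiv ℝ (fderiv ℝ f) x‖ ≤ C) (a v : X) :
    ‖f (a + v) - f a - fderiv ℝ f a v‖ ≤ C * ‖v‖ ^ 2 := by
  have hdf : Differentiable ℝ f := hf.differentiable (by norm_num)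
  have hDf : Differentiable ℝ (fderiv ℝ f) :=
    (hf.fderiv_right (m := 1) (by norm_num)).differentiable (by norm_num)
  have lipDf := lip_of_fderiv_bound hDf hC
  set η : X → Y := fun u => f (a + u) - (fderiv ℝ f a) u with hη
  have hd : ∀ u ∈ Metric.closedBall (0 : X) ‖v‖,
      HasFDerivWithinAt η (fderiv ℝ f (a + u) - fderiv ℝ f a) (Metric.closedBall (0 : X) ‖v‖) u :=
    fun u _ => (((shift_hasFDerivAt hdf a u).sub ((fderiv ℝ f a).hasFDerivAt))).hasFDerivWithinAt
  have bound : ∀ u ∈ Metric.closedBall (0 : X) ‖v‖,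
      ‖fderiv ℝ f (a + u) - fderiv ℝ f a‖ ≤ C * ‖v‖ := by
    intro u hu
    have : ‖fderiv ℝ f (a + u) - fderiv ℝ f a‖ ≤ C * ‖a + u - a‖ := lipDf _ _
    have hC0 : 0 ≤ C := le_trans (ContinuousLinearMap.opNorm_nonneg _) (hC 0)
    simp only [add_sub_cancel_left] at this
    exact this.trans (by
      have := Metric.mem_closedBall.1 hu
      simp only [dist_zero_right] at this
      exact mul_le_mul_of_nonneg_left this hC0)
  have hv : v ∈ Metric.closedBall (0:X) ‖v‖ := by
    simp [Metric.mem_closedBall, dist_zero_right]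
  have h0 : (0:X) ∈ Metric.closedBall (0:X) ‖v‖ := Metric.mem_closedBall_self (norm_nonneg v)
  have key := (convex_closedBall (0:X) ‖v‖).norm_image_sub_le_of_norm_hasFDerivWithin_le
    hd bound h0 hv
  have heq : η v - η 0 = f (a + v) - f a - fderiv ℝ f a v := by
    simp only [hη, map_zero, add_zero, sub_zero]
    abel
  rw [← heq]
  calc ‖η v - η 0‖ ≤ C * ‖v‖ * ‖v - 0‖ := key
    _ = C * ‖v‖ ^ 2 := by rw [sub_zero]; ring

lemma lip_shift {f : X → Y} (hf : Differentiable ℝ f) {C : ℝ}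
    (hlip : ∀ a b, ‖fderiv ℝ f a - fderiv ℝ f b‖ ≤ C * ‖a - b‖)
    (v a b : X) :
    ‖(f (a + v) - f a) - (f (b + v) - f b)‖ ≤ (C * ‖v‖) * ‖a - b‖ := by
  have hψ : ∀ h : X, HasFDerivAt (fun h => f (h + v) - f h)
      (fderiv ℝ f (h + v) - fderiv ℝ f h) h := by
    intro h
    have h1 : HasFDerivAt (fun h => f (h + v)) (fderiv ℝ f (h + v)) h := by
      simpa [Function.comp_def] using ((hf (h + v)).hasFDerivAt).comp h ((hasFDerivAt_id h).add_const v)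
    exact h1.sub (hf h).hasFDerivAt
  have bound : ∀ h : X, ‖fderiv ℝ f (h + v) - fderiv ℝ f h‖ ≤ C * ‖v‖ := by
    intro h
    have := hlip (h + v) h
    simpa [add_sub_cancel_left] using this
  exact convex_univ.norm_image_sub_le_of_norm_hasFDerivWithin_le
    (fun h _ => (hψ h).hasFDerivWithinAt) (fun h _ => bound h) trivial trivial

lemma lemC {f : X → Y} (hf : ContDiff ℝ 3 f) {C3 : ℝ}
    (hC3 : ∀ x, @Norm.norm _ ContinuousLinearMap.hasOpNorm (fderiv ℝ (fderiv ℝ (fderiv ℝ f)) x) ≤ C3)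
    (v a b : X) :
    ‖(f (a + v) - f a - fderiv ℝ f a v) - (f (b + v) - f b - fderiv ℝ f b v)‖
      ≤ (C3 * ‖v‖ ^ 2) * ‖a - b‖ := by
  have hdf : Differentiable ℝ f := hf.differentiable (by norm_num)
  have hDf : ContDiff ℝ 2 (fderiv ℝ f) := hf.fderiv_right (by norm_num)
  have hDfd : Differentiable ℝ (fderiv ℝ f) := hDf.differentiable (by norm_num)
  have hψ : ∀ h : X, HasFDerivAt (fun h => f (h + v) - f h - fderiv ℝ f h v)
      (fderiv ℝ f (h + v) - fderiv ℝ f h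
        - (ContinuousLinearMap.apply ℝ Y v).comp (fderiv ℝ (fderiv ℝ f) h)) h := by
    intro h
    have h1 : HasFDerivAt (fun h => f (h + v)) (fderiv ℝ f (h + v)) h := by
      simpa [Function.comp_def] using ((hdf (h + v)).hasFDerivAt).comp h ((hasFDerivAt_id h).add_const v)
    have h3 : HasFDerivAt (fun h => fderiv ℝ f h v)
        ((ContinuousLinearMap.apply ℝ Y v).comp (fderiv ℝ (fderiv ℝ f) h)) h :=
      (ContinuousLinearMap.apply ℝ Y v).hasFDerivAt.comp h (hDfd h).hasFDerivAt
    exact (h1.sub (hdf h).hasFDerivAt).sub h3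
  have bound : ∀ h : X, ‖fderiv ℝ f (h + v) - fderiv ℝ f h
      - (ContinuousLinearMap.apply ℝ Y v).comp (fderiv ℝ (fderiv ℝ f) h)‖ ≤ C3 * ‖v‖ ^ 2 := by
    intro h
    have tay : ‖fderiv ℝ f (h + v) - fderiv ℝ f h - fderiv ℝ (fderiv ℝ f) h v‖ ≤ C3 * ‖v‖ ^ 2 :=
      taylor1 hDf hC3 h v
    refine ContinuousLinearMap.opNorm_le_bound _ (le_trans (norm_nonneg _) tay) ?_
    intro w
    have symm : ∀ p q : X, fderiv ℝ (fderiv ℝ f) h p q = fderiv ℝ (fderiv ℝ f) h q p :=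
      second_derivative_symmetric (fun y => (hdf y).hasFDerivAt) (hDfd h).hasFDerivAt
    have heq : (fderiv ℝ f (h + v) - fderiv ℝ f h
        - (ContinuousLinearMap.apply ℝ Y v).comp (fderiv ℝ (fderiv ℝ f) h)) w
        = (fderiv ℝ f (h + v) - fderiv ℝ f h - fderiv ℝ (fderiv ℝ f) h v) w := by
      simp [ContinuousLinearMap.sub_apply, ContinuousLinearMap.comp_apply,
        ContinuousLinearMap.apply_apply, symm w v]
    rw [heq]
    exact le_trans (ContinuousLinearMap.le_opNorm _ w)
      (mul_le_mul_of_nonneg_right tay (norm_nonneg w))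
  exact convex_univ.norm_image_sub_le_of_norm_hasFDerivWithin_le
    (fun h _ => (hψ h).hasFDerivWithinAt) (fun h _ => bound h) trivial trivial

end helpers

set_option maxHeartbeats 2000000 in
theorem stmt_0
    {H G E : Type*}
    [NormedAddCommGroup H] [InnerProductSpace ℝ H] [CompleteSpace H]
    [TopologicalSpace.SeparableSpace H] [MeasurableSpace H] [BorelSpace H]
    [NormedAddCommGroup G] [InnerProductSpace ℝ G] [CompleteSpace G]
    [TopologicalSpace.SeparableSpace G]
    [MeasurableSpace E] (F : Measure E) [SigmaFinite F]
    (α : H → H) (σ : ℕ → H → H) (γ : H → E → H)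
    (hα : ∀ n : ℕ, ∃ L : ℝ, 0 ≤ L ∧ ∀ h₁ h₂ : H, ‖h₁‖ ≤ (n : ℝ) → ‖h₂‖ ≤ (n : ℝ) →
      ‖α h₁ - α h₂‖ ≤ L * ‖h₁ - h₂‖)
    (hσC1 : ∀ j : ℕ, ContDiff ℝ 1 (σ j))
    (hσ : ∀ n : ℕ, ∃ κ : ℕ → ℝ, (∀ j, 0 ≤ κ j) ∧ Summable (fun j => κ j ^ 2) ∧
      (∀ j : ℕ, ∀ h₁ h₂ : H, ‖h₁‖ ≤ (n : ℝ) → ‖h₂‖ ≤ (n : ℝ) →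
        ‖σ j h₁ - σ j h₂‖ ≤ κ j * ‖h₁ - h₂‖) ∧
      (∀ j : ℕ, ∀ h : H, ‖h‖ ≤ (n : ℝ) → ‖σ j h‖ ≤ κ j))
    (hγmeas : Measurable (Function.uncurry γ))
    (hγ : ∀ n : ℕ, ∃ ρ : E → ℝ, Measurable ρ ∧ (∀ x, 0 ≤ ρ x) ∧
      Integrable (fun x => max (ρ x ^ 2) (ρ x ^ 4)) F ∧
      (∀ x : E, ∀ h₁ h₂ : H, ‖h₁‖ ≤ (n : ℝ) → ‖h₂‖ ≤ (n : ℝ) →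
        ‖γ h₁ x - γ h₂ x‖ ≤ ρ x * ‖h₁ - h₂‖) ∧
      (∀ x : E, ∀ h : H, ‖h‖ ≤ (n : ℝ) → ‖γ h x‖ ≤ ρ x))
    (g : H → G) (hg : ContDiff ℝ 3 g)
    (hg1 : ∃ C : ℝ, ∀ h : H, ‖fderiv ℝ g h‖ ≤ C)
    (hg2 : ∃ C : ℝ, ∀ h : H, ‖fderiv ℝ (fderiv ℝ g) h‖ ≤ C)
    (hg3 : ∃ C : ℝ, ∀ h : H, @Norm.norm _ ContinuousLinearMap.hasOpNorm (fderiv ℝ (fderiv ℝ (fderiv ℝ g)) h) ≤ C)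
    (ahat : H → G)
    (hahat : ∀ h : H, ahat h = fderiv ℝ g h (α h)
      + (1 / 2 : ℝ) • ∑' j : ℕ, fderiv ℝ (fderiv ℝ g) h (σ j h) (σ j h)
      + ∫ x, (g (h + γ h x) - g h - fderiv ℝ g h (γ h x)) ∂F)
    (bhat : ℕ → H → G) (hbhat : ∀ j h, bhat j h = fderiv ℝ g h (σ j h))
    (chat : H → E → G) (hchat : ∀ h x, chat h x = g (h + γ h x) - g h) :
    -- (1) well-definedness of ahat
    (∀ h : H, Summable (fun j : ℕ => ‖fderiv ℝ (fderiv ℝ g) h (σ j h) (σ j h)‖) ∧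
      Integrable (fun x => g (h + γ h x) - g h - fderiv ℝ g h (γ h x)) F) ∧
    -- (2) graded Lipschitz estimate for ahat
    (∀ n : ℕ, ∃ L : ℝ, 0 ≤ L ∧ ∀ h₁ h₂ : H, ‖h₁‖ ≤ (n : ℝ) → ‖h₂‖ ≤ (n : ℝ) →
      ‖ahat h₁ - ahat h₂‖ ≤ L * ‖h₁ - h₂‖) ∧
    -- (3) regularity of bhat
    ((∀ j : ℕ, ContDiff ℝ 1 (bhat j)) ∧
      ∀ n : ℕ, ∃ κ : ℕ → ℝ, (∀ j, 0 ≤ κ j) ∧ Summable (fun j => κ j ^ 2) ∧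
        (∀ j : ℕ, ∀ h₁ h₂ : H, ‖h₁‖ ≤ (n : ℝ) → ‖h₂‖ ≤ (n : ℝ) →
          ‖bhat j h₁ - bhat j h₂‖ ≤ κ j * ‖h₁ - h₂‖) ∧
        (∀ j : ℕ, ∀ h : H, ‖h‖ ≤ (n : ℝ) → ‖bhat j h‖ ≤ κ j)) ∧
    -- (4) regularity of chat
    (∀ n : ℕ, ∃ ρ : E → ℝ, Measurable ρ ∧ (∀ x, 0 ≤ ρ x) ∧
      Integrable (fun x => ρ x ^ 2) F ∧
      (∀ x : E, ∀ h₁ h₂ : H, ‖h₁‖ ≤ (n : ℝ) → ‖h₂‖ ≤ (n : ℝ) →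
        ‖chat h₁ x - chat h₂ x‖ ≤ ρ x * ‖h₁ - h₂‖) ∧
      (∀ x : E, ∀ h : H, ‖h‖ ≤ (n : ℝ) → ‖chat h x‖ ≤ ρ x)) ∧
    -- (5) improved integrability when g is linear
    ((∃ T : H →L[ℝ] G, ∀ h, g h = T h) →
      ∀ n : ℕ, ∃ ρ : E → ℝ, Measurable ρ ∧ (∀ x, 0 ≤ ρ x) ∧
        Integrable (fun x => max (ρ x ^ 2) (ρ x ^ 4)) F ∧
        (∀ x : E, ∀ h₁ h₂ : H, ‖h₁‖ ≤ (n : ℝ) → ‖h₂‖ ≤ (n : ℝ) →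
          ‖chat h₁ x - chat h₂ x‖ ≤ ρ x * ‖h₁ - h₂‖) ∧
        (∀ x : E, ∀ h : H, ‖h‖ ≤ (n : ℝ) → ‖chat h x‖ ≤ ρ x)) := by
  haveI : SecondCountableTopology H := UniformSpace.secondCountable_of_separable H
  obtain ⟨C1, hC1⟩ := hg1
  obtain ⟨C2, hC2⟩ := hg2
  obtain ⟨C3, hC3⟩ := hg3
  have hC10 : 0 ≤ C1 := le_trans (norm_nonneg _) (hC1 0)
  have hC20 : 0 ≤ C2 := le_trans (ContinuousLinearMap.opNorm_nonneg _) (hC2 0)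
  have hC30 : 0 ≤ C3 := le_trans (ContinuousLinearMap.opNorm_nonneg _) (hC3 0)
  have hgd : Differentiable ℝ g := hg.differentiable (by norm_num)
  have hDg : ContDiff ℝ 2 (fderiv ℝ g) := hg.fderiv_right (by norm_num)
  have hDgd : Differentiable ℝ (fderiv ℝ g) := hDg.differentiable (by norm_num)
  have hD2g : ContDiff ℝ 1 (fderiv ℝ (fderiv ℝ g)) := hDg.fderiv_right (by norm_num)
  have lipg := lip_of_fderiv_bound hgd hC1
  have lipDg := lip_of_fderiv_bound hDgd hC2
  have lipD2g := lip_of_fderiv_bound (hD2g.differentiable (by norm_num)) hC3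
  have tayg := taylor1 (hg.of_le (by norm_num)) hC2
  -- summability of the second-order series
  have normsum : ∀ (h : H) (κ : ℕ → ℝ), (∀ j, 0 ≤ κ j) → Summable (fun j => κ j ^ 2) →
      (∀ j, ‖σ j h‖ ≤ κ j) →
      Summable (fun j : ℕ => ‖fderiv ℝ (fderiv ℝ g) h (σ j h) (σ j h)‖) := by
    intro h κ hκ0 hκs hb
    refine Summable.of_nonneg_of_le (fun j => norm_nonneg _) (fun j => ?_) (hκs.mul_left C2)
    calc ‖fderiv ℝ (fderiv ℝ g) h (σ j h) (σ j h)‖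
        ≤ ‖fderiv ℝ (fderiv ℝ g) h (σ j h)‖ * ‖σ j h‖ := ContinuousLinearMap.le_opNorm _ _
      _ ≤ (‖fderiv ℝ (fderiv ℝ g) h‖ * ‖σ j h‖) * ‖σ j h‖ :=
          mul_le_mul_of_nonneg_right (ContinuousLinearMap.le_opNorm _ _) (norm_nonneg _)
      _ ≤ (C2 * κ j) * κ j :=
          mul_le_mul (mul_le_mul (hC2 h) (hb j) (norm_nonneg _) hC20) (hb j) (norm_nonneg _)
            (mul_nonneg hC20 (hκ0 j))
      _ = C2 * κ j ^ 2 := by ring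
  have measγ : ∀ h : H, StronglyMeasurable (fun x => γ h x) := fun h =>
    (hγmeas.comp measurable_prodMk_left).stronglyMeasurable
  have sq_int : ∀ (ρ : E → ℝ), Measurable ρ → (∀ x, 0 ≤ ρ x) →
      Integrable (fun x => max (ρ x ^ 2) (ρ x ^ 4)) F → Integrable (fun x => ρ x ^ 2) F := by
    intro ρ hm hρ0 hint
    refine hint.mono' ((hm.pow_const 2).aestronglyMeasurable)
      (Filter.Eventually.of_forall fun x => ?_)
    rw [Real.norm_eq_abs, abs_of_nonneg (by positivity)]
    exact le_max_left _ _
  have key_int : ∀ (ρ : E → ℝ), (∀ x, 0 ≤ ρ x) →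
      Integrable (fun x => ρ x ^ 2) F → ∀ h : H, (∀ x, ‖γ h x‖ ≤ ρ x) →
      Integrable (fun x => g (h + γ h x) - g h - fderiv ℝ g h (γ h x)) F := by
    intro ρ hρ0 hρi h hb
    have cont : Continuous (fun v : H => g (h + v) - g h - fderiv ℝ g h v) :=
      ((hg.continuous.comp (continuous_const.add continuous_id)).sub continuous_const).sub
        (fderiv ℝ g h).continuous
    have sm : AEStronglyMeasurable (fun x => g (h + γ h x) - g h - fderiv ℝ g h (γ h x)) F :=
      (cont.comp_stronglyMeasurable (measγ h)).aestronglyMeasurable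
    refine (hρi.const_mul C2).mono' sm (Filter.Eventually.of_forall fun x => ?_)
    calc ‖g (h + γ h x) - g h - fderiv ℝ g h (γ h x)‖ ≤ C2 * ‖γ h x‖ ^ 2 := tayg h (γ h x)
      _ ≤ C2 * ρ x ^ 2 := mul_le_mul_of_nonneg_left (pow_le_pow_left₀ (norm_nonneg _) (hb x) 2) hC20
  refine ⟨?_, ?_, ⟨?_, ?_⟩, ?_, ?_⟩
  -- (1)
  · intro h
    obtain ⟨κ, hκ0, hκs, hκlip, hκb⟩ := hσ ⌈‖h‖⌉₊
    obtain ⟨ρ, hρm, hρ0, hρmax, hρlip, hρb⟩ := hγ ⌈‖h‖⌉₊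
    have hn : ‖h‖ ≤ (⌈‖h‖⌉₊ : ℝ) := Nat.le_ceil _
    exact ⟨normsum h κ hκ0 hκs (fun j => hκb j h hn),
      key_int ρ hρ0 (sq_int ρ hρm hρ0 hρmax) h (fun x => hρb x h hn)⟩
  -- (2)
  · intro n
    obtain ⟨Lα, hLα0, hLα⟩ := hα n
    obtain ⟨κ, hκ0, hκs, hκlip, hκb⟩ := hσ n
    obtain ⟨ρ, hρm, hρ0, hρmax, hρlip, hρb⟩ := hγ n
    have hρ2 : Integrable (fun x => ρ x ^ 2) F := sq_int ρ hρm hρ0 hρmax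
    set S := ∑' j, κ j ^ 2 with hS
    set I := ∫ x, ρ x ^ 2 ∂F with hI
    have hS0 : 0 ≤ S := tsum_nonneg (fun j => sq_nonneg _)
    have hI0 : 0 ≤ I := integral_nonneg (fun x => sq_nonneg _)
    set Mα := Lα * n + ‖α 0‖ with hMα
    have hMα0 : 0 ≤ Mα := add_nonneg (mul_nonneg hLα0 (Nat.cast_nonneg n)) (norm_nonneg _)
    have hL0 : 0 ≤ (C2 * Mα + C1 * Lα) + (1/2) * ((C3 + 2*C2) * S) + (3*C2 + C3) * I := by
      have h1 : 0 ≤ C2 * Mα := mul_nonneg hC20 hMα0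
      have h2 : 0 ≤ C1 * Lα := mul_nonneg hC10 hLα0
      have h3 : 0 ≤ (C3 + 2*C2) * S := mul_nonneg (by linarith) hS0
      have h4 : 0 ≤ (3*C2 + C3) * I := mul_nonneg (by linarith) hI0
      have h3' : 0 ≤ (1/2:ℝ) * ((C3 + 2*C2) * S) := mul_nonneg (by norm_num) h3
      exact add_nonneg (add_nonneg (add_nonneg h1 h2) h3') h4
    refine ⟨(C2 * Mα + C1 * Lα) + (1/2) * ((C3 + 2*C2) * S) + (3*C2 + C3) * I, hL0, ?_⟩
    intro h₁ h₂ hh₁ hh₂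
    have hΔ0 : (0:ℝ) ≤ ‖h₁ - h₂‖ := norm_nonneg _
    rw [hahat h₁, hahat h₂]
    -- Term A
    have hα1 : ‖α h₁‖ ≤ Mα := by
      have h0 : ‖α h₁ - α 0‖ ≤ Lα * ‖h₁ - 0‖ := hLα h₁ 0 hh₁ (by simp)
      have : ‖α h₁‖ ≤ ‖α h₁ - α 0‖ + ‖α 0‖ := by
        calc ‖α h₁‖ = ‖(α h₁ - α 0) + α 0‖ := by rw [sub_add_cancel]
          _ ≤ ‖α h₁ - α 0‖ + ‖α 0‖ := norm_add_le _ _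
      rw [sub_zero] at h0
      have hn1 : ‖h₁‖ ≤ (n:ℝ) := hh₁
      have : ‖α h₁‖ ≤ Lα * ‖h₁‖ + ‖α 0‖ := by linarith
      have hstep : Lα * ‖h₁‖ ≤ Lα * n := mul_le_mul_of_nonneg_left hn1 hLα0
      rw [hMα]; linarith
    have hA : ‖fderiv ℝ g h₁ (α h₁) - fderiv ℝ g h₂ (α h₂)‖
        ≤ (C2 * Mα + C1 * Lα) * ‖h₁ - h₂‖ := by
      have e : fderiv ℝ g h₁ (α h₁) - fderiv ℝ g h₂ (α h₂)
          = (fderiv ℝ g h₁ - fderiv ℝ g h₂) (α h₁) + fderiv ℝ g h₂ (α h₁ - α h₂) := by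
        simp only [ContinuousLinearMap.sub_apply, map_sub]; abel
      rw [e]
      have t1 : ‖(fderiv ℝ g h₁ - fderiv ℝ g h₂) (α h₁)‖ ≤ (C2 * ‖h₁ - h₂‖) * Mα :=
        le_trans (ContinuousLinearMap.le_opNorm _ _)
          (mul_le_mul (lipDg h₁ h₂) hα1 (norm_nonneg _) (mul_nonneg hC20 hΔ0))
      have t2 : ‖fderiv ℝ g h₂ (α h₁ - α h₂)‖ ≤ C1 * (Lα * ‖h₁ - h₂‖) :=
        le_trans (ContinuousLinearMap.le_opNorm _ _)
          (mul_le_mul (hC1 h₂) (hLα h₁ h₂ hh₁ hh₂) (norm_nonneg _) hC10)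
      calc ‖(fderiv ℝ g h₁ - fderiv ℝ g h₂) (α h₁) + fderiv ℝ g h₂ (α h₁ - α h₂)‖
          ≤ ‖(fderiv ℝ g h₁ - fderiv ℝ g h₂) (α h₁)‖ + ‖fderiv ℝ g h₂ (α h₁ - α h₂)‖ :=
            norm_add_le _ _
        _ ≤ (C2 * ‖h₁ - h₂‖) * Mα + C1 * (Lα * ‖h₁ - h₂‖) := add_le_add t1 t2
        _ = (C2 * Mα + C1 * Lα) * ‖h₁ - h₂‖ := by ring
    -- Term B
    have sn₁ := normsum h₁ κ hκ0 hκs (fun j => hκb j h₁ hh₁)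
    have sn₂ := normsum h₂ κ hκ0 hκs (fun j => hκb j h₂ hh₂)
    have sv₁ : Summable (fun j : ℕ => fderiv ℝ (fderiv ℝ g) h₁ (σ j h₁) (σ j h₁)) := sn₁.of_norm
    have sv₂ : Summable (fun j : ℕ => fderiv ℝ (fderiv ℝ g) h₂ (σ j h₂) (σ j h₂)) := sn₂.of_norm
    have hBj : ∀ j : ℕ, ‖fderiv ℝ (fderiv ℝ g) h₁ (σ j h₁) (σ j h₁)
        - fderiv ℝ (fderiv ℝ g) h₂ (σ j h₂) (σ j h₂)‖
        ≤ ((C3 + 2*C2) * κ j ^ 2) * ‖h₁ - h₂‖ := by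
      intro j
      have ka : ‖σ j h₁‖ ≤ κ j := hκb j h₁ hh₁
      have kb : ‖σ j h₂‖ ≤ κ j := hκb j h₂ hh₂
      have kab : ‖σ j h₁ - σ j h₂‖ ≤ κ j * ‖h₁ - h₂‖ := hκlip j h₁ h₂ hh₁ hh₂
      have hκj0 : 0 ≤ κ j := hκ0 j
      have e : fderiv ℝ (fderiv ℝ g) h₁ (σ j h₁) (σ j h₁)
          - fderiv ℝ (fderiv ℝ g) h₂ (σ j h₂) (σ j h₂)
          = ((fderiv ℝ (fderiv ℝ g) h₁ - fderiv ℝ (fderiv ℝ g) h₂) (σ j h₁)) (σ j h₁)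
            + (fderiv ℝ (fderiv ℝ g) h₂ (σ j h₁ - σ j h₂)) (σ j h₁)
            + (fderiv ℝ (fderiv ℝ g) h₂ (σ j h₂)) (σ j h₁ - σ j h₂) := by
        simp only [ContinuousLinearMap.sub_apply, map_sub]; abel
      rw [e]
      have t1 : ‖((fderiv ℝ (fderiv ℝ g) h₁ - fderiv ℝ (fderiv ℝ g) h₂) (σ j h₁)) (σ j h₁)‖
          ≤ ((C3 * ‖h₁ - h₂‖) * κ j) * κ j := by
        refine le_trans (ContinuousLinearMap.le_opNorm _ _) ?_
        refine mul_le_mul ?_ ka (norm_nonneg _)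
          (mul_nonneg (mul_nonneg hC30 hΔ0) hκj0)
        refine le_trans (ContinuousLinearMap.le_opNorm _ _) ?_
        exact mul_le_mul (lipD2g h₁ h₂) ka (norm_nonneg _) (mul_nonneg hC30 hΔ0)
      have t2 : ‖(fderiv ℝ (fderiv ℝ g) h₂ (σ j h₁ - σ j h₂)) (σ j h₁)‖
          ≤ (C2 * (κ j * ‖h₁ - h₂‖)) * κ j := by
        refine le_trans (ContinuousLinearMap.le_opNorm _ _) ?_
        refine mul_le_mul ?_ ka (norm_nonneg _)
          (mul_nonneg hC20 (mul_nonneg hκj0 hΔ0))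
        refine le_trans (ContinuousLinearMap.le_opNorm _ _) ?_
        exact mul_le_mul (hC2 h₂) kab (norm_nonneg _) hC20
      have t3 : ‖(fderiv ℝ (fderiv ℝ g) h₂ (σ j h₂)) (σ j h₁ - σ j h₂)‖
          ≤ (C2 * κ j) * (κ j * ‖h₁ - h₂‖) := by
        refine le_trans (ContinuousLinearMap.le_opNorm _ _) ?_
        refine mul_le_mul ?_ kab (norm_nonneg _) (mul_nonneg hC20 hκj0)
        refine le_trans (ContinuousLinearMap.le_opNorm _ _) ?_
        exact mul_le_mul (hC2 h₂) kb (norm_nonneg _) hC20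
      have tri : ‖((fderiv ℝ (fderiv ℝ g) h₁ - fderiv ℝ (fderiv ℝ g) h₂) (σ j h₁)) (σ j h₁)
            + (fderiv ℝ (fderiv ℝ g) h₂ (σ j h₁ - σ j h₂)) (σ j h₁)
            + (fderiv ℝ (fderiv ℝ g) h₂ (σ j h₂)) (σ j h₁ - σ j h₂)‖
          ≤ ‖((fderiv ℝ (fderiv ℝ g) h₁ - fderiv ℝ (fderiv ℝ g) h₂) (σ j h₁)) (σ j h₁)‖
            + ‖(fderiv ℝ (fderiv ℝ g) h₂ (σ j h₁ - σ j h₂)) (σ j h₁)‖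
            + ‖(fderiv ℝ (fderiv ℝ g) h₂ (σ j h₂)) (σ j h₁ - σ j h₂)‖ :=
        norm_add₃_le
      have final : ((C3 * ‖h₁ - h₂‖) * κ j) * κ j + (C2 * (κ j * ‖h₁ - h₂‖)) * κ j
          + (C2 * κ j) * (κ j * ‖h₁ - h₂‖) = ((C3 + 2*C2) * κ j ^ 2) * ‖h₁ - h₂‖ := by ring
      linarith
    have snd : Summable (fun j : ℕ => ‖fderiv ℝ (fderiv ℝ g) h₁ (σ j h₁) (σ j h₁)
        - fderiv ℝ (fderiv ℝ g) h₂ (σ j h₂) (σ j h₂)‖) := by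
      refine Summable.of_nonneg_of_le (fun j => norm_nonneg _) (fun j => hBj j) ?_
      simpa [mul_comm, mul_assoc, mul_left_comm] using
        (hκs.mul_left ((C3 + 2*C2) * ‖h₁ - h₂‖))
    have hB : ‖(1/2 : ℝ) • ∑' j : ℕ, fderiv ℝ (fderiv ℝ g) h₁ (σ j h₁) (σ j h₁)
        - (1/2 : ℝ) • ∑' j : ℕ, fderiv ℝ (fderiv ℝ g) h₂ (σ j h₂) (σ j h₂)‖
        ≤ ((1/2) * ((C3 + 2*C2) * S)) * ‖h₁ - h₂‖ := by
      rw [← smul_sub, norm_smul]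
      have e : (∑' j : ℕ, fderiv ℝ (fderiv ℝ g) h₁ (σ j h₁) (σ j h₁))
          - ∑' j : ℕ, fderiv ℝ (fderiv ℝ g) h₂ (σ j h₂) (σ j h₂)
          = ∑' j : ℕ, (fderiv ℝ (fderiv ℝ g) h₁ (σ j h₁) (σ j h₁)
            - fderiv ℝ (fderiv ℝ g) h₂ (σ j h₂) (σ j h₂)) := (Summable.tsum_sub sv₁ sv₂).symm
      rw [e]
      have b1 : ‖∑' j : ℕ, (fderiv ℝ (fderiv ℝ g) h₁ (σ j h₁) (σ j h₁)
          - fderiv ℝ (fderiv ℝ g) h₂ (σ j h₂) (σ j h₂))‖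
          ≤ ∑' j : ℕ, ‖fderiv ℝ (fderiv ℝ g) h₁ (σ j h₁) (σ j h₁)
            - fderiv ℝ (fderiv ℝ g) h₂ (σ j h₂) (σ j h₂)‖ := norm_tsum_le_tsum_norm snd
      have b2 : (∑' j : ℕ, ‖fderiv ℝ (fderiv ℝ g) h₁ (σ j h₁) (σ j h₁)
          - fderiv ℝ (fderiv ℝ g) h₂ (σ j h₂) (σ j h₂)‖)
          ≤ ∑' j : ℕ, ((C3 + 2*C2) * κ j ^ 2) * ‖h₁ - h₂‖ := by
        refine Summable.tsum_le_tsum hBj snd ?_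
        simpa [mul_comm, mul_assoc, mul_left_comm] using
          (hκs.mul_left ((C3 + 2*C2) * ‖h₁ - h₂‖))
      have b3 : (∑' j : ℕ, ((C3 + 2*C2) * κ j ^ 2) * ‖h₁ - h₂‖)
          = ((C3 + 2*C2) * S) * ‖h₁ - h₂‖ := by
        rw [tsum_mul_right]
        congr 1
        rw [hS, ← tsum_mul_left]
      have hnh : ‖(1/2 : ℝ)‖ = 1/2 := by rw [Real.norm_eq_abs]; norm_num
      rw [hnh]
      have := le_trans b1 (le_of_le_of_eq b2 b3)
      linarith [this]
    -- Term C
    have int₁ := key_int ρ hρ0 hρ2 h₁ (fun x => hρb x h₁ hh₁)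
    have int₂ := key_int ρ hρ0 hρ2 h₂ (fun x => hρb x h₂ hh₂)
    have pointwise : ∀ x : E,
        ‖(g (h₁ + γ h₁ x) - g h₁ - fderiv ℝ g h₁ (γ h₁ x))
          - (g (h₂ + γ h₂ x) - g h₂ - fderiv ℝ g h₂ (γ h₂ x))‖
        ≤ ((3*C2 + C3) * ‖h₁ - h₂‖) * ρ x ^ 2 := by
      intro x
      set v₁ := γ h₁ x with hv₁
      set v₂ := γ h₂ x with hv₂
      have b1 : ‖v₁‖ ≤ ρ x := hρb x h₁ hh₁
      have b2 : ‖v₂‖ ≤ ρ x := hρb x h₂ hh₂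
      have b12 : ‖v₁ - v₂‖ ≤ ρ x * ‖h₁ - h₂‖ := hρlip x h₁ h₂ hh₁ hh₂
      have hρx0 : 0 ≤ ρ x := hρ0 x
      -- second part, lemC
      have partb : ‖(g (h₁ + v₂) - g h₁ - fderiv ℝ g h₁ v₂)
          - (g (h₂ + v₂) - g h₂ - fderiv ℝ g h₂ v₂)‖ ≤ (C3 * ‖v₂‖ ^ 2) * ‖h₁ - h₂‖ :=
        lemC hg hC3 v₂ h₁ h₂
      have partb' : ‖(g (h₁ + v₂) - g h₁ - fderiv ℝ g h₁ v₂)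
          - (g (h₂ + v₂) - g h₂ - fderiv ℝ g h₂ v₂)‖ ≤ (C3 * ρ x ^ 2) * ‖h₁ - h₂‖ := by
        refine le_trans partb (mul_le_mul_of_nonneg_right ?_ hΔ0)
        have : ‖v₂‖ ^ 2 ≤ ρ x ^ 2 := by nlinarith [norm_nonneg v₂]
        exact mul_le_mul_of_nonneg_left this hC30
      -- first part
      have hw1 : ‖v₁ - v₂‖ ≤ 2 * ρ x := by
        have := norm_sub_le v₁ v₂
        linarith
      have hsq : ‖v₁ - v₂‖ ^ 2 ≤ (2 * ρ x) * (ρ x * ‖h₁ - h₂‖) := by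
        rw [sq]
        exact mul_le_mul hw1 b12 (norm_nonneg _) (by positivity)
      have hvsum : h₁ + v₁ = (h₁ + v₂) + (v₁ - v₂) := by abel
      have parta : ‖(g (h₁ + v₁) - g h₁ - fderiv ℝ g h₁ v₁)
          - (g (h₁ + v₂) - g h₁ - fderiv ℝ g h₁ v₂)‖
          ≤ (3*C2 * ρ x ^ 2) * ‖h₁ - h₂‖ := by
        have e : (g (h₁ + v₁) - g h₁ - fderiv ℝ g h₁ v₁)
            - (g (h₁ + v₂) - g h₁ - fderiv ℝ g h₁ v₂)
            = (g ((h₁ + v₂) + (v₁ - v₂)) - g (h₁ + v₂) - fderiv ℝ g (h₁ + v₂) (v₁ - v₂))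
              + ((fderiv ℝ g (h₁ + v₂) - fderiv ℝ g h₁) (v₁ - v₂)) := by
          rw [← hvsum]
          simp [ContinuousLinearMap.sub_apply, map_sub]
          abel
        rw [e]
        have t1 : ‖g ((h₁ + v₂) + (v₁ - v₂)) - g (h₁ + v₂) - fderiv ℝ g (h₁ + v₂) (v₁ - v₂)‖
            ≤ C2 * ‖v₁ - v₂‖ ^ 2 := tayg (h₁ + v₂) (v₁ - v₂)
        have t1' : C2 * ‖v₁ - v₂‖ ^ 2 ≤ C2 * ((2 * ρ x) * (ρ x * ‖h₁ - h₂‖)) :=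
          mul_le_mul_of_nonneg_left hsq hC20
        have t2 : ‖(fderiv ℝ g (h₁ + v₂) - fderiv ℝ g h₁) (v₁ - v₂)‖
            ≤ (C2 * ‖v₂‖) * (ρ x * ‖h₁ - h₂‖) := by
          refine le_trans (ContinuousLinearMap.le_opNorm _ _) ?_
          refine mul_le_mul ?_ b12 (norm_nonneg _) (mul_nonneg hC20 (norm_nonneg _))
          have := lipDg (h₁ + v₂) h₁
          simpa [add_sub_cancel_left] using this
        have t2' : (C2 * ‖v₂‖) * (ρ x * ‖h₁ - h₂‖) ≤ (C2 * ρ x) * (ρ x * ‖h₁ - h₂‖) := by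
          refine mul_le_mul_of_nonneg_right ?_ (by positivity)
          exact mul_le_mul_of_nonneg_left b2 hC20
        have tri := norm_add_le (g ((h₁ + v₂) + (v₁ - v₂)) - g (h₁ + v₂)
            - fderiv ℝ g (h₁ + v₂) (v₁ - v₂)) ((fderiv ℝ g (h₁ + v₂) - fderiv ℝ g h₁) (v₁ - v₂))
        have final : C2 * ((2 * ρ x) * (ρ x * ‖h₁ - h₂‖)) + (C2 * ρ x) * (ρ x * ‖h₁ - h₂‖)
            = (3*C2 * ρ x ^ 2) * ‖h₁ - h₂‖ := by ring
        linarith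
      have tri2 : ‖(g (h₁ + v₁) - g h₁ - fderiv ℝ g h₁ v₁)
          - (g (h₂ + v₂) - g h₂ - fderiv ℝ g h₂ v₂)‖
          ≤ ‖(g (h₁ + v₁) - g h₁ - fderiv ℝ g h₁ v₁)
            - (g (h₁ + v₂) - g h₁ - fderiv ℝ g h₁ v₂)‖
            + ‖(g (h₁ + v₂) - g h₁ - fderiv ℝ g h₁ v₂)
            - (g (h₂ + v₂) - g h₂ - fderiv ℝ g h₂ v₂)‖ := by
        have := norm_sub_le_norm_sub_add_norm_sub
          (g (h₁ + v₁) - g h₁ - fderiv ℝ g h₁ v₁)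
          (g (h₁ + v₂) - g h₁ - fderiv ℝ g h₁ v₂)
          (g (h₂ + v₂) - g h₂ - fderiv ℝ g h₂ v₂)
        exact this
      have final2 : (3*C2 * ρ x ^ 2) * ‖h₁ - h₂‖ + (C3 * ρ x ^ 2) * ‖h₁ - h₂‖
          = ((3*C2 + C3) * ‖h₁ - h₂‖) * ρ x ^ 2 := by ring
      linarith
    have hCterm : ‖(∫ x, (g (h₁ + γ h₁ x) - g h₁ - fderiv ℝ g h₁ (γ h₁ x)) ∂F)
        - ∫ x, (g (h₂ + γ h₂ x) - g h₂ - fderiv ℝ g h₂ (γ h₂ x)) ∂F‖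
        ≤ ((3*C2 + C3) * I) * ‖h₁ - h₂‖ := by
      rw [← integral_sub int₁ int₂]
      calc ‖∫ x, ((g (h₁ + γ h₁ x) - g h₁ - fderiv ℝ g h₁ (γ h₁ x))
            - (g (h₂ + γ h₂ x) - g h₂ - fderiv ℝ g h₂ (γ h₂ x))) ∂F‖
          ≤ ∫ x, ‖(g (h₁ + γ h₁ x) - g h₁ - fderiv ℝ g h₁ (γ h₁ x))
            - (g (h₂ + γ h₂ x) - g h₂ - fderiv ℝ g h₂ (γ h₂ x))‖ ∂F :=
            norm_integral_le_integral_norm _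
        _ ≤ ∫ x, ((3*C2 + C3) * ‖h₁ - h₂‖) * ρ x ^ 2 ∂F := by
            refine integral_mono (int₁.sub int₂).norm (hρ2.const_mul _) ?_
            exact fun x => pointwise x
        _ = ((3*C2 + C3) * ‖h₁ - h₂‖) * I := by rw [integral_const_mul, hI]
        _ = ((3*C2 + C3) * I) * ‖h₁ - h₂‖ := by ring
    -- combine
    have split : (fderiv ℝ g h₁ (α h₁)
        + (1 / 2 : ℝ) • ∑' j : ℕ, fderiv ℝ (fderiv ℝ g) h₁ (σ j h₁) (σ j h₁)
        + ∫ x, (g (h₁ + γ h₁ x) - g h₁ - fderiv ℝ g h₁ (γ h₁ x)) ∂F)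
        - (fderiv ℝ g h₂ (α h₂)
        + (1 / 2 : ℝ) • ∑' j : ℕ, fderiv ℝ (fderiv ℝ g) h₂ (σ j h₂) (σ j h₂)
        + ∫ x, (g (h₂ + γ h₂ x) - g h₂ - fderiv ℝ g h₂ (γ h₂ x)) ∂F)
        = (fderiv ℝ g h₁ (α h₁) - fderiv ℝ g h₂ (α h₂))
          + (((1 / 2 : ℝ) • ∑' j : ℕ, fderiv ℝ (fderiv ℝ g) h₁ (σ j h₁) (σ j h₁)
            - (1 / 2 : ℝ) • ∑' j : ℕ, fderiv ℝ (fderiv ℝ g) h₂ (σ j h₂) (σ j h₂))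
          + ((∫ x, (g (h₁ + γ h₁ x) - g h₁ - fderiv ℝ g h₁ (γ h₁ x)) ∂F)
            - ∫ x, (g (h₂ + γ h₂ x) - g h₂ - fderiv ℝ g h₂ (γ h₂ x)) ∂F)) := by abel
    rw [split]
    have tri3 := norm_add_le (fderiv ℝ g h₁ (α h₁) - fderiv ℝ g h₂ (α h₂))
      (((1 / 2 : ℝ) • ∑' j : ℕ, fderiv ℝ (fderiv ℝ g) h₁ (σ j h₁) (σ j h₁)
        - (1 / 2 : ℝ) • ∑' j : ℕ, fderiv ℝ (fderiv ℝ g) h₂ (σ j h₂) (σ j h₂))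
      + ((∫ x, (g (h₁ + γ h₁ x) - g h₁ - fderiv ℝ g h₁ (γ h₁ x)) ∂F)
        - ∫ x, (g (h₂ + γ h₂ x) - g h₂ - fderiv ℝ g h₂ (γ h₂ x)) ∂F))
    have tri4 := norm_add_le ((1 / 2 : ℝ) • ∑' j : ℕ, fderiv ℝ (fderiv ℝ g) h₁ (σ j h₁) (σ j h₁)
        - (1 / 2 : ℝ) • ∑' j : ℕ, fderiv ℝ (fderiv ℝ g) h₂ (σ j h₂) (σ j h₂))
      ((∫ x, (g (h₁ + γ h₁ x) - g h₁ - fderiv ℝ g h₁ (γ h₁ x)) ∂F)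
        - ∫ x, (g (h₂ + γ h₂ x) - g h₂ - fderiv ℝ g h₂ (γ h₂ x)) ∂F)
    have expand : ((C2 * Mα + C1 * Lα) + (1/2) * ((C3 + 2*C2) * S) + (3*C2 + C3) * I) * ‖h₁ - h₂‖
        = (C2 * Mα + C1 * Lα) * ‖h₁ - h₂‖ + ((1/2) * ((C3 + 2*C2) * S)) * ‖h₁ - h₂‖
          + ((3*C2 + C3) * I) * ‖h₁ - h₂‖ := by ring
    rw [expand]
    refine le_trans (le_trans tri3 (add_le_add_right tri4 _)) ?_
    refine le_trans (add_le_add hA (add_le_add hB hCterm)) (le_of_eq (by ring))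
  -- (3a)
  · intro j
    have hb : bhat j = fun h => fderiv ℝ g h (σ j h) := funext (hbhat j)
    rw [hb]
    exact (hDg.of_le (by norm_num)).clm_apply (hσC1 j)
  -- (3b)
  · intro n
    obtain ⟨κ, hκ0, hκs, hκlip, hκb⟩ := hσ n
    set M := max C1 0 + max C2 0 with hM
    have hM0 : 0 ≤ M := add_nonneg (le_max_right _ _) (le_max_right _ _)
    have hMC1 : C1 ≤ M := le_trans (le_max_left _ _) (le_add_of_nonneg_right (le_max_right _ _))
    have hMC12 : C1 + C2 ≤ M := add_le_add (le_max_left _ _) (le_max_left _ _)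
    refine ⟨fun j => M * κ j, fun j => mul_nonneg hM0 (hκ0 j), ?_, ?_, ?_⟩
    · have : (fun j => (M * κ j) ^ 2) = fun j => M ^ 2 * κ j ^ 2 := by
        funext j; ring
      rw [this]
      exact hκs.mul_left _
    · intro j h₁ h₂ hh₁ hh₂
      rw [hbhat, hbhat]
      have hΔ0 : (0:ℝ) ≤ ‖h₁ - h₂‖ := norm_nonneg _
      have e : fderiv ℝ g h₁ (σ j h₁) - fderiv ℝ g h₂ (σ j h₂)
          = (fderiv ℝ g h₁ - fderiv ℝ g h₂) (σ j h₁) + fderiv ℝ g h₂ (σ j h₁ - σ j h₂) := by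
        simp only [ContinuousLinearMap.sub_apply, map_sub]; abel
      rw [e]
      have t1 : ‖(fderiv ℝ g h₁ - fderiv ℝ g h₂) (σ j h₁)‖ ≤ (C2 * ‖h₁ - h₂‖) * κ j :=
        le_trans (ContinuousLinearMap.le_opNorm _ _)
          (mul_le_mul (lipDg h₁ h₂) (hκb j h₁ hh₁) (norm_nonneg _) (mul_nonneg hC20 hΔ0))
      have t2 : ‖fderiv ℝ g h₂ (σ j h₁ - σ j h₂)‖ ≤ C1 * (κ j * ‖h₁ - h₂‖) :=
        le_trans (ContinuousLinearMap.le_opNorm _ _)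
          (mul_le_mul (hC1 h₂) (hκlip j h₁ h₂ hh₁ hh₂) (norm_nonneg _) hC10)
      have comb : (C2 * ‖h₁ - h₂‖) * κ j + C1 * (κ j * ‖h₁ - h₂‖)
          ≤ (M * κ j) * ‖h₁ - h₂‖ := by
        have h1 : (C2 * ‖h₁ - h₂‖) * κ j + C1 * (κ j * ‖h₁ - h₂‖)
            = ((C1 + C2) * κ j) * ‖h₁ - h₂‖ := by ring
        rw [h1]
        exact mul_le_mul_of_nonneg_right
          (mul_le_mul_of_nonneg_right hMC12 (hκ0 j)) hΔ0
      calc ‖(fderiv ℝ g h₁ - fderiv ℝ g h₂) (σ j h₁) + fderiv ℝ g h₂ (σ j h₁ - σ j h₂)‖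
          ≤ ‖(fderiv ℝ g h₁ - fderiv ℝ g h₂) (σ j h₁)‖ + ‖fderiv ℝ g h₂ (σ j h₁ - σ j h₂)‖ :=
            norm_add_le _ _
        _ ≤ (C2 * ‖h₁ - h₂‖) * κ j + C1 * (κ j * ‖h₁ - h₂‖) := add_le_add t1 t2
        _ ≤ (M * κ j) * ‖h₁ - h₂‖ := comb
    · intro j h hh
      rw [hbhat]
      calc ‖fderiv ℝ g h (σ j h)‖ ≤ ‖fderiv ℝ g h‖ * ‖σ j h‖ := ContinuousLinearMap.le_opNorm _ _
        _ ≤ C1 * κ j := mul_le_mul (hC1 h) (hκb j h hh) (norm_nonneg _) hC10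
        _ ≤ M * κ j := mul_le_mul_of_nonneg_right hMC1 (hκ0 j)
  -- (4)
  · intro n
    obtain ⟨ρ, hρm, hρ0, hρmax, hρlip, hρb⟩ := hγ n
    have hρ2 := sq_int ρ hρm hρ0 hρmax
    set M := max C1 0 + max C2 0 with hM
    have hM0 : 0 ≤ M := add_nonneg (le_max_right _ _) (le_max_right _ _)
    have hMC1 : C1 ≤ M := le_trans (le_max_left _ _) (le_add_of_nonneg_right (le_max_right _ _))
    have hMC12 : C1 + C2 ≤ M := add_le_add (le_max_left _ _) (le_max_left _ _)
    refine ⟨fun x => M * ρ x, hρm.const_mul M, fun x => mul_nonneg hM0 (hρ0 x), ?_, ?_, ?_⟩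
    · have e : (fun x => (M * ρ x) ^ 2) = fun x => M ^ 2 * ρ x ^ 2 := by funext x; ring
      rw [e]
      exact hρ2.const_mul _
    · intro x h₁ h₂ hh₁ hh₂
      rw [hchat, hchat]
      have hΔ0 : (0:ℝ) ≤ ‖h₁ - h₂‖ := norm_nonneg _
      set v₁ := γ h₁ x with hv₁
      set v₂ := γ h₂ x with hv₂
      have b2 : ‖v₂‖ ≤ ρ x := hρb x h₂ hh₂
      have b12 : ‖v₁ - v₂‖ ≤ ρ x * ‖h₁ - h₂‖ := hρlip x h₁ h₂ hh₁ hh₂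
      have hρx0 : 0 ≤ ρ x := hρ0 x
      have e : (g (h₁ + v₁) - g h₁) - (g (h₂ + v₂) - g h₂)
          = (g (h₁ + v₁) - g (h₁ + v₂)) + ((g (h₁ + v₂) - g h₁) - (g (h₂ + v₂) - g h₂)) := by
        abel
      rw [e]
      have t1 : ‖g (h₁ + v₁) - g (h₁ + v₂)‖ ≤ C1 * (ρ x * ‖h₁ - h₂‖) := by
        have := lipg (h₁ + v₁) (h₁ + v₂)
        have e2 : h₁ + v₁ - (h₁ + v₂) = v₁ - v₂ := by abel
        rw [e2] at this
        exact le_trans this (mul_le_mul_of_nonneg_left b12 hC10)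
      have t2 : ‖(g (h₁ + v₂) - g h₁) - (g (h₂ + v₂) - g h₂)‖ ≤ (C2 * ρ x) * ‖h₁ - h₂‖ := by
        have := lip_shift hgd lipDg v₂ h₁ h₂
        refine le_trans this (mul_le_mul_of_nonneg_right ?_ hΔ0)
        exact mul_le_mul_of_nonneg_left b2 hC20
      have comb : C1 * (ρ x * ‖h₁ - h₂‖) + (C2 * ρ x) * ‖h₁ - h₂‖
          ≤ (M * ρ x) * ‖h₁ - h₂‖ := by
        have h1 : C1 * (ρ x * ‖h₁ - h₂‖) + (C2 * ρ x) * ‖h₁ - h₂‖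
            = ((C1 + C2) * ρ x) * ‖h₁ - h₂‖ := by ring
        rw [h1]
        exact mul_le_mul_of_nonneg_right (mul_le_mul_of_nonneg_right hMC12 hρx0) hΔ0
      calc ‖(g (h₁ + v₁) - g (h₁ + v₂)) + ((g (h₁ + v₂) - g h₁) - (g (h₂ + v₂) - g h₂))‖
          ≤ ‖g (h₁ + v₁) - g (h₁ + v₂)‖ + ‖(g (h₁ + v₂) - g h₁) - (g (h₂ + v₂) - g h₂)‖ :=
            norm_add_le _ _
        _ ≤ C1 * (ρ x * ‖h₁ - h₂‖) + (C2 * ρ x) * ‖h₁ - h₂‖ := add_le_add t1 t2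
        _ ≤ (M * ρ x) * ‖h₁ - h₂‖ := comb
    · intro x h hh
      rw [hchat]
      have := lipg (h + γ h x) h
      have e2 : h + γ h x - h = γ h x := by abel
      rw [e2] at this
      calc ‖g (h + γ h x) - g h‖ ≤ C1 * ‖γ h x‖ := this
        _ ≤ C1 * ρ x := mul_le_mul_of_nonneg_left (hρb x h hh) hC10
        _ ≤ M * ρ x := mul_le_mul_of_nonneg_right hMC1 (hρ0 x)
  -- (5)
  · rintro ⟨T, hT⟩ n
    obtain ⟨ρ, hρm, hρ0, hρmax, hρlip, hρb⟩ := hγ n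
    set c := max ‖T‖ 1 with hc
    have hc1 : (1:ℝ) ≤ c := le_max_right _ _
    have hc0 : (0:ℝ) ≤ c := zero_le_one.trans hc1
    have hcT : ‖T‖ ≤ c := le_max_left _ _
    have chatT : ∀ (h : H) (x : E), chat h x = T (γ h x) := by
      intro h x
      rw [hchat, hT, hT, ← map_sub]
      congr 1
      abel
    refine ⟨fun x => c * ρ x, hρm.const_mul c, fun x => mul_nonneg hc0 (hρ0 x), ?_, ?_, ?_⟩
    · refine (hρmax.const_mul (c^4)).mono'
        ((((hρm.const_mul c).pow_const 2).max ((hρm.const_mul c).pow_const 4)).aestronglyMeasurable)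
        (Filter.Eventually.of_forall fun x => ?_)
      have hρx0 : 0 ≤ ρ x := hρ0 x
      rw [Real.norm_eq_abs, abs_of_nonneg (le_max_of_le_left (by positivity))]
      have hc2 : c ^ 2 ≤ c ^ 4 := pow_le_pow_right₀ hc1 (by norm_num)
      refine max_le ?_ ?_
      · calc (c * ρ x) ^ 2 = c ^ 2 * ρ x ^ 2 := by ring
          _ ≤ c ^ 4 * ρ x ^ 2 := mul_le_mul_of_nonneg_right hc2 (sq_nonneg _)
          _ ≤ c ^ 4 * max (ρ x ^ 2) (ρ x ^ 4) :=
            mul_le_mul_of_nonneg_left (le_max_left _ _) (by positivity)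
      · calc (c * ρ x) ^ 4 = c ^ 4 * ρ x ^ 4 := by ring
          _ ≤ c ^ 4 * max (ρ x ^ 2) (ρ x ^ 4) :=
            mul_le_mul_of_nonneg_left (le_max_right _ _) (by positivity)
    · intro x h₁ h₂ hh₁ hh₂
      rw [chatT, chatT, ← map_sub]
      calc ‖T (γ h₁ x - γ h₂ x)‖ ≤ ‖T‖ * ‖γ h₁ x - γ h₂ x‖ := ContinuousLinearMap.le_opNorm _ _
        _ ≤ c * (ρ x * ‖h₁ - h₂‖) :=
            mul_le_mul hcT (hρlip x h₁ h₂ hh₁ hh₂) (norm_nonneg _) hc0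
        _ = (c * ρ x) * ‖h₁ - h₂‖ := by ring
    · intro x h hh
      rw [chatT]
      calc ‖T (γ h x)‖ ≤ ‖T‖ * ‖γ h x‖ := ContinuousLinearMap.le_opNorm _ _
        _ ≤ c * ρ x := mul_le_mul hcT (hρb x h hh) (norm_nonneg _) hc0
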